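/- Let μ > 0. For z ∈ ℝ and r ≥ 0 define g_μ(z,r) := − e^{−√(z²+2μ) r} / (2 √(z²+2μ)) and r₂(z,r) := g_μ(z,r) − g_μ(0,r). Then there exists a constant C_μ > 0, depending only on μ, such that for all z with |z| < √(2μ), all r ≥ 0, and all k ∈ {0,1,2}, |z|^k | ∂_z^k r₂(z,r) | ≤ C_μ |z|² ⟨r⟩^{2+k}. -/

import Mathlib

set_option maxHeartbeats 1000000

open MeasureTheory Real

noncomputable def Sq (μ w : ℝ) : ℝ := Real.sqrt (w ^ 2 + 2 * μ)

lemma Sq_pos (μ : ℝ) (hμ : 0 < μ) (w : ℝ) : 0 < Sq μ w := by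
  apply Real.sqrt_pos.mpr; nlinarith [sq_nonneg w]

lemma Sq_sq (μ : ℝ) (hμ : 0 < μ) (w : ℝ) : (Sq μ w) ^ 2 = w ^ 2 + 2 * μ := by
  rw [Sq, sq_sqrt]; nlinarith [sq_nonneg w]

lemma Sq_ge (μ w : ℝ) : Real.sqrt (2 * μ) ≤ Sq μ w := by
  apply Real.sqrt_le_sqrt; nlinarith [sq_nonneg w]

lemma hasDerivAt_Sq (μ : ℝ) (hμ : 0 < μ) (w : ℝ) :
    HasDerivAt (Sq μ) (w / Sq μ w) w := by
  have hpos : (0:ℝ) < w ^ 2 + 2 * μ := by nlinarith [sq_nonneg w]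
  have hinner : HasDerivAt (fun w : ℝ => w ^ 2 + 2 * μ) (2 * w) w := by
    simpa using (hasDerivAt_pow 2 w).add_const (2 * μ)
  have := (Real.hasDerivAt_sqrt (ne_of_gt hpos)).comp w hinner
  refine this.congr_deriv ?_
  have h0 : Real.sqrt (w ^ 2 + 2 * μ) ≠ 0 := ne_of_gt (Sq_pos μ hμ w)
  rw [Sq]; field_simp

noncomputable def f0 (μ r w : ℝ) : ℝ := -Real.exp (-(Sq μ w) * r) / (2 * Sq μ w)

noncomputable def f1 (μ r w : ℝ) : ℝ :=
  w / 2 * Real.exp (-(Sq μ w) * r) * (r * ((Sq μ w) ^ 2)⁻¹ + ((Sq μ w) ^ 3)⁻¹)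

noncomputable def f2 (μ r w : ℝ) : ℝ :=
  1 / 2 * Real.exp (-(Sq μ w) * r) *
    ((r / (Sq μ w) ^ 2 + 1 / (Sq μ w) ^ 3) - r ^ 2 * (w ^ 2 / (Sq μ w) ^ 3)
      - r * (w ^ 2 / (Sq μ w) ^ 4) - 2 * r * (w ^ 2 / (Sq μ w) ^ 4)
      - 3 * (w ^ 2 / (Sq μ w) ^ 5))

lemma hasDerivAt_exp_Sq (μ : ℝ) (hμ : 0 < μ) (r w : ℝ) :
    HasDerivAt (fun w => Real.exp (-(Sq μ w) * r))
      (Real.exp (-(Sq μ w) * r) * (-(w / Sq μ w) * r)) w := by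
  have hinner : HasDerivAt (fun w => -(Sq μ w) * r) (-(w / Sq μ w) * r) w :=
    ((hasDerivAt_Sq μ hμ w).neg).mul_const r
  exact (Real.hasDerivAt_exp _).comp w hinner

lemma hasDerivAt_f0 (μ : ℝ) (hμ : 0 < μ) (r w : ℝ) :
    HasDerivAt (f0 μ r) (f1 μ r w) w := by
  have hs := Sq_pos μ hμ w
  have hnum : HasDerivAt (fun w => -Real.exp (-(Sq μ w) * r))
      (-(Real.exp (-(Sq μ w) * r) * (-(w / Sq μ w) * r))) w :=
    (hasDerivAt_exp_Sq μ hμ r w).neg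
  have hden : HasDerivAt (fun w => 2 * Sq μ w) (2 * (w / Sq μ w)) w :=
    (hasDerivAt_Sq μ hμ w).const_mul 2
  have hden0 : 2 * Sq μ w ≠ 0 := by positivity
  have := hnum.div hden hden0
  refine this.congr_deriv ?_
  have h0 : Sq μ w ≠ 0 := ne_of_gt hs
  rw [f1]; field_simp; ring

lemma hasDerivAt_f1 (μ : ℝ) (hμ : 0 < μ) (r w : ℝ) :
    HasDerivAt (f1 μ r) (f2 μ r w) w := by
  have hs := Sq_pos μ hμ w
  have h0 : Sq μ w ≠ 0 := ne_of_gt hs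
  have hS := hasDerivAt_Sq μ hμ w
  have hE := hasDerivAt_exp_Sq μ hμ r w
  have hw2 : HasDerivAt (fun w : ℝ => w / 2) (1 / 2) w := by
    simpa using (hasDerivAt_id w).div_const 2
  have hS2 : HasDerivAt (fun w => (Sq μ w) ^ 2) (2 * (Sq μ w) ^ 1 * (w / Sq μ w)) w := hS.pow 2
  have hS3 : HasDerivAt (fun w => (Sq μ w) ^ 3) (3 * (Sq μ w) ^ 2 * (w / Sq μ w)) w := hS.pow 3
  have hS20 : (Sq μ w) ^ 2 ≠ 0 := by positivity
  have hS30 : (Sq μ w) ^ 3 ≠ 0 := by positivity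
  have h := ((hw2.mul hE).mul (((hS2.inv hS20).const_mul r).add (hS3.inv hS30)))
  refine h.congr_deriv ?_
  rw [f2]; simp only [Pi.mul_apply, Pi.add_apply, Pi.inv_apply]; field_simp; ring

lemma le_sqrt_one_add (r : ℝ) (hr : 0 ≤ r) : r ≤ Real.sqrt (1 + r ^ 2) := by
  have h := Real.sqrt_le_sqrt (show r ^ 2 ≤ 1 + r ^ 2 by linarith)
  rwa [Real.sqrt_sq hr] at h

lemma one_le_sqrt_one_add (r : ℝ) : 1 ≤ Real.sqrt (1 + r ^ 2) := by
  have h := Real.sqrt_le_sqrt (show (1:ℝ) ≤ 1 + r ^ 2 by nlinarith [sq_nonneg r])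
  rwa [Real.sqrt_one] at h

lemma f1_bound (μ : ℝ) (hμ : 0 < μ) (r : ℝ) (hr : 0 ≤ r) (w : ℝ) :
    |f1 μ r w| ≤ 1 / 2 * ((Real.sqrt (2*μ) ^ 2)⁻¹ + (Real.sqrt (2*μ) ^ 3)⁻¹)
        * (|w| * Real.sqrt (1 + r ^ 2)) := by
  have ha : 0 < Real.sqrt (2*μ) := Real.sqrt_pos.mpr (by linarith)
  set a := Real.sqrt (2*μ) with ha_def
  have has : a ≤ Sq μ w := Sq_ge μ w
  have hs : 0 < Sq μ w := Sq_pos μ hμ w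
  set R := Real.sqrt (1 + r ^ 2) with hR_def
  have hrR : r ≤ R := le_sqrt_one_add r hr
  have h1R : 1 ≤ R := one_le_sqrt_one_add r
  have hE1 : Real.exp (-(Sq μ w) * r) ≤ 1 := by
    rw [Real.exp_le_one_iff]; nlinarith
  have hE0 : (0:ℝ) ≤ Real.exp (-(Sq μ w) * r) := Real.exp_nonneg _
  have hX0 : (0:ℝ) ≤ r * ((Sq μ w) ^ 2)⁻¹ + ((Sq μ w) ^ 3)⁻¹ := by positivity
  have hi2 : ((Sq μ w) ^ 2)⁻¹ ≤ (a ^ 2)⁻¹ :=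
    inv_anti₀ (by positivity) (by gcongr)
  have hi3 : ((Sq μ w) ^ 3)⁻¹ ≤ (a ^ 3)⁻¹ :=
    inv_anti₀ (by positivity) (by gcongr)
  have key : r * ((Sq μ w) ^ 2)⁻¹ + ((Sq μ w) ^ 3)⁻¹ ≤ R * (a^2)⁻¹ + R * (a^3)⁻¹ := by
    have t1 : r * ((Sq μ w) ^ 2)⁻¹ ≤ R * (a^2)⁻¹ :=
      mul_le_mul hrR hi2 (by positivity) (by positivity)
    have t2 : ((Sq μ w) ^ 3)⁻¹ ≤ R * (a^3)⁻¹ :=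
      le_trans hi3 (le_mul_of_one_le_left (by positivity) h1R)
    linarith
  have e1 : |f1 μ r w| = |w| / 2 *
      (Real.exp (-(Sq μ w) * r) * (r * ((Sq μ w) ^ 2)⁻¹ + ((Sq μ w) ^ 3)⁻¹)) := by
    rw [f1, abs_mul, abs_mul, abs_of_nonneg hE0, abs_of_nonneg hX0, abs_div, abs_two]
    ring
  rw [e1]
  have h2 : Real.exp (-(Sq μ w) * r) * (r * ((Sq μ w) ^ 2)⁻¹ + ((Sq μ w) ^ 3)⁻¹)
      ≤ 1 * (R * (a^2)⁻¹ + R * (a^3)⁻¹) :=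
    mul_le_mul hE1 key hX0 zero_le_one
  calc |w| / 2 * (Real.exp (-(Sq μ w) * r) * (r * ((Sq μ w) ^ 2)⁻¹ + ((Sq μ w) ^ 3)⁻¹))
      ≤ |w| / 2 * (1 * (R * (a^2)⁻¹ + R * (a^3)⁻¹)) :=
        mul_le_mul_of_nonneg_left h2 (by positivity)
    _ = 1 / 2 * ((a ^ 2)⁻¹ + (a ^ 3)⁻¹) * (|w| * R) := by ring

lemma f2_bound (μ : ℝ) (hμ : 0 < μ) (r : ℝ) (hr : 0 ≤ r) (w : ℝ) :
    |f2 μ r w| ≤ 1 / 2 * (1 / Real.sqrt (2*μ) + 4 * (1 / Real.sqrt (2*μ) ^ 2)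
        + 4 * (1 / Real.sqrt (2*μ) ^ 3)) * Real.sqrt (1 + r ^ 2) ^ 2 := by
  have ha : 0 < Real.sqrt (2*μ) := Real.sqrt_pos.mpr (by linarith)
  set a := Real.sqrt (2*μ) with ha_def
  have has : a ≤ Sq μ w := Sq_ge μ w
  have hs : 0 < Sq μ w := Sq_pos μ hμ w
  have hw2 : w ^ 2 ≤ (Sq μ w) ^ 2 := by rw [Sq_sq μ hμ]; nlinarith
  set s := Sq μ w with hs_def
  set R := Real.sqrt (1 + r ^ 2) with hR_def
  have hrR : r ≤ R := le_sqrt_one_add r hr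
  have h1R : 1 ≤ R := one_le_sqrt_one_add r
  have hR0 : (0:ℝ) ≤ R := by positivity
  have hRR2 : R ≤ R ^ 2 := by nlinarith
  have h1R2 : 1 ≤ R ^ 2 := by nlinarith
  have hE1 : Real.exp (-s * r) ≤ 1 := by rw [Real.exp_le_one_iff]; nlinarith
  have hE0 : (0:ℝ) ≤ Real.exp (-s * r) := Real.exp_nonneg _
  have ha2 : a ^ 2 ≤ s ^ 2 := by gcongr
  have ha3 : a ^ 3 ≤ s ^ 3 := by gcongr
  have hA : w ^ 2 / s ^ 3 ≤ 1 / a := by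
    rw [div_le_div_iff₀ (by positivity) ha]
    nlinarith [mul_le_mul has hw2 (sq_nonneg w) hs.le]
  have hB : w ^ 2 / s ^ 4 ≤ 1 / a ^ 2 := by
    rw [div_le_div_iff₀ (by positivity) (by positivity)]
    nlinarith [mul_le_mul ha2 hw2 (sq_nonneg w) (by positivity : (0:ℝ) ≤ s ^ 2)]
  have hC : w ^ 2 / s ^ 5 ≤ 1 / a ^ 3 := by
    rw [div_le_div_iff₀ (by positivity) (by positivity)]
    nlinarith [mul_le_mul ha3 hw2 (sq_nonneg w) (by positivity : (0:ℝ) ≤ s ^ 3)]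
  have ht1 : r / s ^ 2 ≤ R * (1 / a ^ 2) := by
    rw [mul_one_div, div_le_div_iff₀ (by positivity) (by positivity)]
    nlinarith [mul_le_mul hrR ha2 (by positivity) hR0]
  have ht2 : 1 / s ^ 3 ≤ 1 / a ^ 3 := by
    apply div_le_div_of_nonneg_left one_pos.le (by positivity) ha3
  have q1 : R * (1 / a ^ 2) ≤ R ^ 2 * (1 / a ^ 2) :=
    mul_le_mul_of_nonneg_right hRR2 (by positivity)
  have q2 : (1:ℝ) * (1 / a ^ 3) ≤ R ^ 2 * (1 / a ^ 3) :=
    mul_le_mul_of_nonneg_right h1R2 (by positivity)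
  have p3 : r ^ 2 * (w ^ 2 / s ^ 3) ≤ R ^ 2 * (1 / a) :=
    mul_le_mul (by nlinarith) hA (by positivity) (by positivity)
  have p4 : r * (w ^ 2 / s ^ 4) ≤ R ^ 2 * (1 / a ^ 2) := by
    calc r * (w ^ 2 / s ^ 4) ≤ R * (1 / a ^ 2) := mul_le_mul hrR hB (by positivity) hR0
      _ ≤ R ^ 2 * (1 / a ^ 2) := q1
  have p5 : w ^ 2 / s ^ 5 ≤ R ^ 2 * (1 / a ^ 3) := by
    calc w ^ 2 / s ^ 5 ≤ 1 / a ^ 3 := hC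
      _ ≤ R ^ 2 * (1 / a ^ 3) := by nlinarith [q2]
  have nn1 : (0:ℝ) ≤ r ^ 2 * (w ^ 2 / s ^ 3) := by positivity
  have nn2 : (0:ℝ) ≤ r * (w ^ 2 / s ^ 4) := by positivity
  have nn3 : (0:ℝ) ≤ w ^ 2 / s ^ 5 := by positivity
  have nn4 : (0:ℝ) ≤ r / s ^ 2 := by positivity
  have nn5 : (0:ℝ) ≤ 1 / s ^ 3 := by positivity
  have nn6 : (0:ℝ) ≤ R ^ 2 * (1 / a) := by positivity
  have nn7 : (0:ℝ) ≤ R ^ 2 * (1 / a ^ 2) := by positivity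
  have nn8 : (0:ℝ) ≤ R ^ 2 * (1 / a ^ 3) := by positivity
  set T : ℝ := (r / s ^ 2 + 1 / s ^ 3) - r ^ 2 * (w ^ 2 / s ^ 3)
      - r * (w ^ 2 / s ^ 4) - 2 * r * (w ^ 2 / s ^ 4) - 3 * (w ^ 2 / s ^ 5) with hT_def
  have hT : |T| ≤ (1 / a + 4 * (1 / a ^ 2) + 4 * (1 / a ^ 3)) * R ^ 2 := by
    rw [abs_le]; constructor
    · rw [hT_def]; nlinarith [ht1, ht2, q1, q2]
    · rw [hT_def]; nlinarith [p3, p4, p5]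
  rw [f2, ← hs_def, abs_mul, abs_mul, abs_of_nonneg hE0,
    abs_of_nonneg (show (0:ℝ) ≤ 1/2 by norm_num), ← hT_def]
  calc 1 / 2 * Real.exp (-s * r) * |T|
      ≤ 1 / 2 * 1 * ((1 / a + 4 * (1 / a ^ 2) + 4 * (1 / a ^ 3)) * R ^ 2) := by
        apply mul_le_mul (by nlinarith [hE1]) hT (abs_nonneg _) (by norm_num)
    _ = 1 / 2 * (1 / a + 4 * (1 / a ^ 2) + 4 * (1 / a ^ 3)) * R ^ 2 := by ring

/-- Remainder estimate for the Taylor expansion of the lower entry of the free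
resolvent kernel (Lemma 4.1): with `g_μ(z,r) = −e^{−√(z²+2μ) r}/(2√(z²+2μ))` and
`r₂(z,r) = g_μ(z,r) − g_μ(0,r)`, one has
`|z|^k |∂_z^k r₂(z,r)| ≤ C_μ |z|² ⟨r⟩^{2+k}` for `|z| < √(2μ)`, `r ≥ 0`, `k = 0,1,2`. -/
theorem lower_resolvent_remainder_bound (μ : ℝ) (hμ : 0 < μ) :
    ∃ C : ℝ, 0 < C ∧
      ∀ (z : ℝ), |z| < Real.sqrt (2 * μ) → ∀ (r : ℝ), 0 ≤ r → ∀ k : ℕ, k ≤ 2 →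
        |z| ^ k * |iteratedDeriv k (fun w : ℝ =>
            (-(Real.exp (-(Real.sqrt (w ^ 2 + 2 * μ)) * r)) / (2 * Real.sqrt (w ^ 2 + 2 * μ)))
            - (-(Real.exp (-(Real.sqrt ((0 : ℝ) ^ 2 + 2 * μ)) * r))
                / (2 * Real.sqrt ((0 : ℝ) ^ 2 + 2 * μ)))) z|
          ≤ C * |z| ^ 2 * Real.sqrt (1 + r ^ 2) ^ (2 + k) := by
  have ha : 0 < Real.sqrt (2 * μ) := Real.sqrt_pos.mpr (by linarith)
  set a := Real.sqrt (2 * μ) with ha_def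
  set C1 : ℝ := 1 / 2 * ((a ^ 2)⁻¹ + (a ^ 3)⁻¹) with hC1_def
  set C2 : ℝ := 1 / 2 * (1 / a + 4 * (1 / a ^ 2) + 4 * (1 / a ^ 3)) with hC2_def
  have hC1 : 0 < C1 := by rw [hC1_def]; positivity
  have hC2 : 0 < C2 := by rw [hC2_def]; positivity
  refine ⟨C1 + C2 + 1, by positivity, ?_⟩
  intro z hz r hr k hk
  set R := Real.sqrt (1 + r ^ 2) with hR_def
  have h1R : 1 ≤ R := one_le_sqrt_one_add r
  have hR0 : (0:ℝ) ≤ R := by positivity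
  have hFeq : (fun w : ℝ =>
      (-(Real.exp (-(Real.sqrt (w ^ 2 + 2 * μ)) * r)) / (2 * Real.sqrt (w ^ 2 + 2 * μ)))
      - (-(Real.exp (-(Real.sqrt ((0 : ℝ) ^ 2 + 2 * μ)) * r))
          / (2 * Real.sqrt ((0 : ℝ) ^ 2 + 2 * μ))))
      = fun w : ℝ => f0 μ r w - f0 μ r 0 := by
    funext w; rw [f0, f0, Sq, Sq]
  rw [hFeq]
  have hderiv : deriv (fun w : ℝ => f0 μ r w - f0 μ r 0) = f1 μ r :=
    funext fun x => ((hasDerivAt_f0 μ hμ r x).sub_const _).deriv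
  have hf1b : ∀ w : ℝ, |f1 μ r w| ≤ C1 * (|w| * R) := fun w => f1_bound μ hμ r hr w
  interval_cases k
  · -- k = 0 : mean value theorem
    have hmvt : ‖(f0 μ r z - f0 μ r 0) - (f0 μ r 0 - f0 μ r 0)‖
        ≤ (C1 * (|z| * R)) * ‖z - 0‖ := by
      refine Convex.norm_image_sub_le_of_norm_hasDerivWithin_le
        (f := fun w : ℝ => f0 μ r w - f0 μ r 0) (f' := f1 μ r)
        (s := Set.Icc (-|z|) (|z|)) (fun x _ => ?_) (fun x hx => ?_)
        (convex_Icc _ _) ?_ ?_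
      · exact ((hasDerivAt_f0 μ hμ r x).sub_const _).hasDerivWithinAt
      · have hxz : |x| ≤ |z| := abs_le.mpr ⟨hx.1, hx.2⟩
        calc ‖f1 μ r x‖ ≤ C1 * (|x| * R) := hf1b x
          _ ≤ C1 * (|z| * R) := by
              apply mul_le_mul_of_nonneg_left _ hC1.le
              exact mul_le_mul_of_nonneg_right hxz hR0
      · constructor <;> simp [abs_nonneg]
      · exact ⟨neg_abs_le z, le_abs_self z⟩
    simp only [sub_self, sub_zero, Real.norm_eq_abs] at hmvt
    have hRR2 : R ≤ R ^ 2 := by nlinarith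
    have key : C1 * R ≤ (C1 + C2 + 1) * R ^ 2 := by nlinarith [hRR2, hC1.le, hC2.le, sq_nonneg R]
    simp only [iteratedDeriv_zero, pow_zero, one_mul]
    calc |f0 μ r z - f0 μ r 0| ≤ C1 * (|z| * R) * |z| := hmvt
      _ = C1 * R * |z| ^ 2 := by ring
      _ ≤ (C1 + C2 + 1) * R ^ 2 * |z| ^ 2 := mul_le_mul_of_nonneg_right key (by positivity)
      _ = (C1 + C2 + 1) * |z| ^ 2 * R ^ (2 + 0) := by ring
  · -- k = 1
    rw [iteratedDeriv_one, hderiv]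
    have hRR2 : R ≤ R ^ 2 := by nlinarith
    have hRR3 : R ≤ R ^ 3 := by
      nlinarith [mul_nonneg (sq_nonneg R) (sub_nonneg.mpr h1R), hRR2]
    have key : C1 * R ≤ (C1 + C2 + 1) * R ^ 3 := by nlinarith [hRR3, hC1.le, hC2.le]
    calc |z| ^ 1 * |f1 μ r z| ≤ |z| ^ 1 * (C1 * (|z| * R)) :=
          mul_le_mul_of_nonneg_left (hf1b z) (by positivity)
      _ = C1 * R * |z| ^ 2 := by ring
      _ ≤ (C1 + C2 + 1) * R ^ 3 * |z| ^ 2 := mul_le_mul_of_nonneg_right key (by positivity)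
      _ = (C1 + C2 + 1) * |z| ^ 2 * R ^ (2 + 1) := by ring
  · -- k = 2
    rw [show (2:ℕ) = 1 + 1 from rfl, iteratedDeriv_succ, iteratedDeriv_one, hderiv,
      (hasDerivAt_f1 μ hμ r z).deriv]
    have hb := f2_bound μ hμ r hr z
    rw [← ha_def, ← hR_def, ← hC2_def] at hb
    have h1R2 : 1 ≤ R ^ 2 := by nlinarith
    have hR24 : R ^ 2 ≤ R ^ 4 := by
      nlinarith [mul_nonneg (sq_nonneg R) (sub_nonneg.mpr h1R2)]
    have key : C2 * R ^ 2 ≤ (C1 + C2 + 1) * R ^ 4 := by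
      nlinarith [hR24, hC1.le, hC2.le, sq_nonneg R, sq_nonneg (R ^ 2)]
    calc |z| ^ (1 + 1) * |f2 μ r z| ≤ |z| ^ (1 + 1) * (C2 * R ^ 2) :=
          mul_le_mul_of_nonneg_left hb (by positivity)
      _ = C2 * R ^ 2 * |z| ^ 2 := by ring
      _ ≤ (C1 + C2 + 1) * R ^ 4 * |z| ^ 2 := mul_le_mul_of_nonneg_right key (by positivity)
      _ = (C1 + C2 + 1) * |z| ^ 2 * R ^ (2 + (1 + 1)) := by ring
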